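/- Subgraph bottleneck bound: Let H be a stoquastic Hamiltonian on a graph G with strictly positive ground-state φ and ground-state energy λ₀, and let S ⊂ V. Then h_S ≥ λ₀^D(S) − λ₀, where h_S = |∂S| / min(vol(S), vol(V∖S)), |∂S| = Σ_{u∈S, v∉S} w(u,v)φ(u)φ(v), vol(A) = Σ_{u∈A} q(u)φ(u)², and λ₀^D(S) is the lowest Dirichlet eigenvalue of S (the infimum of the Dirichlet Rayleigh quotient over functions supported on S). -/
import Mathlib


theorem statement12 {V : Type*} [Fintype V] [DecidableEq V]
    (w : V → V → ℝ) (hw : ∀ u v, w u v = w v u) (hwpos : ∀ u v, 0 ≤ w u v)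
    (q : V → ℝ) (hq : ∀ u, 0 < q u) (W : V → ℝ) (lam0 : ℝ) (φ : V → ℝ) (hφ : ∀ u, 0 < φ u)
    (heig : ∀ u, (lam0 - W u) * q u * φ u = ∑ v, w u v * (φ u - φ v))
    (S : Finset V) (hSne : S.Nonempty) (hSproper : S ≠ Finset.univ)
    (hvol : ∑ u ∈ S, q u * φ u ^2 ≤ ∑ u ∈ Sᶜ, q u * φ u ^2)
    (lamD : ℝ)
    (hlamD : lamD = sInf {r : ℝ | ∃ f : V → ℝ, (∀ u ∉ S, f u = 0) ∧ f ≠ 0 ∧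
      r = ((1/2) * ∑ u, ∑ v, w u v * (f u - f v)^2 + ∑ u ∈ S, q u * W u * f u ^2) /
        (∑ u ∈ S, q u * f u ^2)}) :
    lamD - lam0 ≤ (∑ u ∈ S, ∑ v ∈ Sᶜ, w u v * φ u * φ v) /
      min (∑ u ∈ S, q u * φ u ^2) (∑ u ∈ Sᶜ, q u * φ u ^2) := by
  classical
  set f : V → ℝ := fun u => if u ∈ S then φ u else 0 with hf
  set volS : ℝ := ∑ u ∈ S, q u * φ u ^2 with hvolS
  set E : ℝ := ∑ u ∈ S, ∑ v ∈ Sᶜ, w u v * φ u * φ v with hE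
  set A : ℝ := ∑ u ∈ S, ∑ v ∈ S, w u v * (φ u - φ v)^2 with hA
  set B : ℝ := ∑ u ∈ S, ∑ v ∈ Sᶜ, w u v * φ u ^2 with hB
  have hvolSpos : 0 < volS := by
    exact Finset.sum_pos (fun u _ => mul_pos (hq u) (pow_pos (hφ u) 2)) hSne
  -- half identity for the S×S part
  have hA2 : ∑ u ∈ S, ∑ v ∈ S, w u v * (φ u - φ v) * φ u = (1/2) * A := by
    have hswap : ∑ u ∈ S, ∑ v ∈ S, w u v * (φ u - φ v) * φ u
        = ∑ u ∈ S, ∑ v ∈ S, w u v * (φ v - φ u) * φ v := by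
      rw [Finset.sum_comm]
      exact Finset.sum_congr rfl fun u _ => Finset.sum_congr rfl fun v _ => by
        rw [hw u v]
    have hsum : ∑ u ∈ S, ∑ v ∈ S, w u v * (φ u - φ v) * φ u
        + ∑ u ∈ S, ∑ v ∈ S, w u v * (φ u - φ v) * φ u = A := by
      nth_rewrite 2 [hswap]
      rw [← Finset.sum_add_distrib, hA]
      refine Finset.sum_congr rfl fun u _ => ?_
      rw [← Finset.sum_add_distrib]
      exact Finset.sum_congr rfl fun v _ => by ring
    linarith
  -- eigenvalue equation summed over S
  have heigS : lam0 * volS - ∑ u ∈ S, q u * W u * φ u ^2 = (1/2) * A + B - E := by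
    have h1 : ∀ u ∈ S, (lam0 - W u) * q u * φ u * φ u
        = ∑ v ∈ S, w u v * (φ u - φ v) * φ u
          + ∑ v ∈ Sᶜ, (w u v * φ u ^2 - w u v * φ u * φ v) := by
      intro u _
      have := heig u
      have h2 : (∑ v, w u v * (φ u - φ v)) * φ u
          = ∑ v ∈ S, w u v * (φ u - φ v) * φ u
            + ∑ v ∈ Sᶜ, (w u v * φ u ^2 - w u v * φ u * φ v) := by
        rw [Finset.sum_mul, ← Finset.sum_add_sum_compl S (fun v => w u v * (φ u - φ v) * φ u)]
        congr 1
        exact Finset.sum_congr rfl fun v _ => by ring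
      rw [← h2, ← this]
    have h3 : ∑ u ∈ S, (lam0 - W u) * q u * φ u * φ u
        = (1/2) * A + (B - E) := by
      rw [Finset.sum_congr rfl h1, Finset.sum_add_distrib, hA2]
      congr 1
      rw [hB, hE, ← Finset.sum_sub_distrib]
      exact Finset.sum_congr rfl fun u _ => by rw [Finset.sum_sub_distrib]
    have h4 : ∑ u ∈ S, (lam0 - W u) * q u * φ u * φ u
        = lam0 * volS - ∑ u ∈ S, q u * W u * φ u ^2 := by
      rw [hvolS, Finset.mul_sum, ← Finset.sum_sub_distrib]
      exact Finset.sum_congr rfl fun u _ => by ring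
    linarith
  -- numerator of the Rayleigh quotient of f
  have hfS : ∀ u ∈ S, f u = φ u := fun u hu => by simp [hf, hu]
  have hfSc : ∀ u ∈ Sᶜ, f u = 0 := fun u hu => by
    simp only [Finset.mem_compl] at hu; simp [hf, hu]
  have hnum : (1/2) * ∑ u, ∑ v, w u v * (f u - f v)^2 + ∑ u ∈ S, q u * W u * f u ^2
      = lam0 * volS + E := by
    have hBB : ∑ u ∈ Sᶜ, ∑ v ∈ S, w u v * φ v ^2 = B := by
      rw [Finset.sum_comm, hB]
      exact Finset.sum_congr rfl fun u _ => Finset.sum_congr rfl fun v _ => by rw [hw u v]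
    have hdbl : ∑ u, ∑ v, w u v * (f u - f v)^2 = A + 2 * B := by
      rw [← Finset.sum_add_sum_compl S (fun u => ∑ v, w u v * (f u - f v)^2)]
      have hS1 : ∑ u ∈ S, ∑ v, w u v * (f u - f v)^2 = A + B := by
        rw [hA, hB, ← Finset.sum_add_distrib]
        refine Finset.sum_congr rfl fun u hu => ?_
        rw [← Finset.sum_add_sum_compl S (fun v => w u v * (f u - f v)^2)]
        congr 1
        · exact Finset.sum_congr rfl fun v hv => by rw [hfS u hu, hfS v hv]
        · exact Finset.sum_congr rfl fun v hv => by rw [hfS u hu, hfSc v hv]; ring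
      have hS2 : ∑ u ∈ Sᶜ, ∑ v, w u v * (f u - f v)^2 = B := by
        rw [← hBB]
        refine Finset.sum_congr rfl fun u hu => ?_
        rw [← Finset.sum_add_sum_compl S (fun v => w u v * (f u - f v)^2)]
        have : ∑ v ∈ Sᶜ, w u v * (f u - f v)^2 = 0 := by
          apply Finset.sum_eq_zero; intro v hv
          rw [hfSc u hu, hfSc v hv]; ring
        rw [this, add_zero]
        exact Finset.sum_congr rfl fun v hv => by rw [hfSc u hu, hfS v hv]; ring
      rw [hS1, hS2]; ring
    have hW : ∑ u ∈ S, q u * W u * f u ^2 = ∑ u ∈ S, q u * W u * φ u ^2 :=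
      Finset.sum_congr rfl fun u hu => by rw [hfS u hu]
    rw [hdbl, hW]; linarith
  -- f is a valid test function
  have hfden : ∑ u ∈ S, q u * f u ^2 = volS :=
    Finset.sum_congr rfl fun u hu => by rw [hfS u hu]
  have hfne : f ≠ 0 := by
    obtain ⟨u, hu⟩ := hSne
    intro h
    have : f u = 0 := congrFun h u
    rw [hfS u hu] at this
    exact absurd this (ne_of_gt (hφ u))
  have hmem : lam0 + E / volS ∈ {r : ℝ | ∃ f : V → ℝ, (∀ u ∉ S, f u = 0) ∧ f ≠ 0 ∧
      r = ((1/2) * ∑ u, ∑ v, w u v * (f u - f v)^2 + ∑ u ∈ S, q u * W u * f u ^2) /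
        (∑ u ∈ S, q u * f u ^2)} := by
    refine ⟨f, fun u hu => by simp [hf, hu], hfne, ?_⟩
    rw [hnum, hfden]
    field_simp
  -- the set is bounded below
  have hbdd : BddBelow {r : ℝ | ∃ f : V → ℝ, (∀ u ∉ S, f u = 0) ∧ f ≠ 0 ∧
      r = ((1/2) * ∑ u, ∑ v, w u v * (f u - f v)^2 + ∑ u ∈ S, q u * W u * f u ^2) /
        (∑ u ∈ S, q u * f u ^2)} := by
    refine ⟨S.inf' hSne W, ?_⟩
    rintro r ⟨g, hg0, hgne, rfl⟩
    have hden : 0 < ∑ u ∈ S, q u * g u ^2 := by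
      have : ∃ u, g u ≠ 0 := by
        by_contra h
        push_neg at h
        exact hgne (funext h)
      obtain ⟨u, hu⟩ := this
      have huS : u ∈ S := by
        by_contra h
        exact hu (hg0 u h)
      refine Finset.sum_pos' (fun v _ => mul_nonneg (hq v).le (sq_nonneg _)) ⟨u, huS, ?_⟩
      exact mul_pos (hq u) (pow_two_pos_of_ne_zero hu)
    rw [le_div_iff₀ hden]
    have h1 : 0 ≤ (1/2) * ∑ u, ∑ v, w u v * (g u - g v)^2 := by
      apply mul_nonneg (by norm_num)
      apply Finset.sum_nonneg; intro u _
      apply Finset.sum_nonneg; intro v _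
      have := hwpos u v
      positivity
    have h2 : S.inf' hSne W * ∑ u ∈ S, q u * g u ^2 ≤ ∑ u ∈ S, q u * W u * g u ^2 := by
      rw [Finset.mul_sum]
      apply Finset.sum_le_sum
      intro u hu
      have hWu : S.inf' hSne W ≤ W u := Finset.inf'_le W hu
      have hqg : 0 ≤ q u * g u ^2 := mul_nonneg (hq u).le (sq_nonneg _)
      calc S.inf' hSne W * (q u * g u ^ 2) ≤ W u * (q u * g u ^2) :=
            mul_le_mul_of_nonneg_right hWu hqg
        _ = q u * W u * g u ^2 := by ring
    linarith
  have hlam : lamD ≤ lam0 + E / volS := by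
    rw [hlamD]
    exact csInf_le hbdd hmem
  have hmin : min (∑ u ∈ S, q u * φ u ^2) (∑ u ∈ Sᶜ, q u * φ u ^2) = volS :=
    min_eq_left hvol
  rw [hmin]
  have hEnn : 0 ≤ E := by
    apply Finset.sum_nonneg; intro u _
    apply Finset.sum_nonneg; intro v _
    have := hwpos u v
    have := (hφ u).le
    have := (hφ v).le
    positivity
  linarith
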